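/- Let P be a row-stochastic n×n matrix, γ ∈ (0,1), r ∈ ℝⁿ with r ≥ 0, and V := (I − γP)^{-1} r. Then ‖(I − γP)^{-1} √(Var_P(V))‖_∞ ≤ (4/(γ√(1−γ))) ‖V‖_∞, where √ is applied entrywise and Var_P(V) := P(V∘V) − (PV)∘(PV). -/

import Mathlib

open Matrix Finset

section Aux

variable {n : ℕ}

lemma mulVec_apply' (M : Matrix (Fin n) (Fin n) ℝ) (v : Fin n → ℝ) (i : Fin n) :
    (M *ᵥ v) i = ∑ j, M i j * v j := rfl

lemma pow_entry_nonneg {P : Matrix (Fin n) (Fin n) ℝ} (hP0 : ∀ i j, 0 ≤ P i j) :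
    ∀ (s : ℕ) (i j : Fin n), 0 ≤ (P ^ s) i j := by
  intro s
  induction s with
  | zero =>
      intro i j
      rw [pow_zero, Matrix.one_apply]
      split <;> norm_num
  | succ s ih =>
      intro i j
      rw [pow_succ, Matrix.mul_apply]
      exact Finset.sum_nonneg fun k _ => mul_nonneg (ih i k) (hP0 k j)

lemma pow_row_sum {P : Matrix (Fin n) (Fin n) ℝ} (hP1 : ∀ i, ∑ j, P i j = 1) :
    ∀ (s : ℕ) (i : Fin n), ∑ j, (P ^ s) i j = 1 := by
  intro s
  induction s with
  | zero =>
      intro i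
      simp [Matrix.one_apply]
  | succ s ih =>
      intro i
      simp only [pow_succ, Matrix.mul_apply]
      rw [Finset.sum_comm]
      calc ∑ k, ∑ j, (P ^ s) i k * P k j
          = ∑ k, (P ^ s) i k * ∑ j, P k j := by
            apply Finset.sum_congr rfl
            intro k _
            rw [Finset.mul_sum]
        _ = 1 := by
            simp_rw [hP1]
            simpa using ih i

lemma nonneg_of_mulVec {Q : Matrix (Fin n) (Fin n) ℝ}
    (hQ0 : ∀ i j, 0 ≤ Q i j) (hQ1 : ∀ i, ∑ j, Q i j = 1)
    {β : ℝ} (hβ0 : 0 ≤ β) (hβ1 : β < 1)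
    {x y : Fin n → ℝ} (hxy : (1 - β • Q) *ᵥ x = y) (hy : ∀ i, 0 ≤ y i) :
    ∀ i, 0 ≤ x i := by
  have hxy' : x - β • (Q *ᵥ x) = y := by
    rw [← hxy, Matrix.sub_mulVec, Matrix.one_mulVec, Matrix.smul_mulVec]
  have hx : ∀ i, x i - β * ∑ j, Q i j * x j = y i := by
    intro i
    have h := congrFun hxy' i
    simpa [mulVec_apply'] using h
  rcases Nat.eq_zero_or_pos n with h0 | hn
  · intro i
    exact absurd i.isLt (by omega)
  · obtain ⟨i0, -, hi0⟩ := Finset.exists_min_image Finset.univ x ⟨⟨0, hn⟩, Finset.mem_univ _⟩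
    have hmin : ∀ j, x i0 ≤ x j := fun j => hi0 j (Finset.mem_univ j)
    have hsum : x i0 ≤ ∑ j, Q i0 j * x j := by
      calc x i0 = ∑ j, Q i0 j * x i0 := by rw [← Finset.sum_mul, hQ1 i0, one_mul]
        _ ≤ ∑ j, Q i0 j * x j :=
            Finset.sum_le_sum fun j _ => mul_le_mul_of_nonneg_left (hmin j) (hQ0 i0 j)
    have h3 : 0 ≤ (1 - β) * x i0 := by
      nlinarith [hy i0, hx i0, mul_le_mul_of_nonneg_left hsum hβ0]
    have h4 : 0 ≤ x i0 := by nlinarith [h3]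
    intro i
    exact le_trans h4 (hmin i)

lemma isUnit_det_aux {Q : Matrix (Fin n) (Fin n) ℝ}
    (hQ0 : ∀ i j, 0 ≤ Q i j) (hQ1 : ∀ i, ∑ j, Q i j = 1)
    {β : ℝ} (hβ0 : 0 ≤ β) (hβ1 : β < 1) :
    IsUnit (1 - β • Q).det := by
  rw [isUnit_iff_ne_zero]
  intro hdet
  obtain ⟨v, hv0, hv⟩ := Matrix.exists_mulVec_eq_zero_iff.mpr hdet
  have h1 : ∀ i, 0 ≤ v i :=
    nonneg_of_mulVec hQ0 hQ1 hβ0 hβ1 hv (fun _ => le_rfl)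
  have hmv : (1 - β • Q) *ᵥ (-v) = 0 := by
    rw [Matrix.mulVec_neg, hv, neg_zero]
  have h2 : ∀ i, 0 ≤ (-v) i :=
    nonneg_of_mulVec hQ0 hQ1 hβ0 hβ1 hmv (fun _ => le_rfl)
  apply hv0
  funext i
  have ha := h1 i
  have hb := h2 i
  have hb' : v i ≤ 0 := by simpa using hb
  have : v i = 0 := le_antisymm hb' ha
  simpa using this

lemma le_const_of_mulVec {Q : Matrix (Fin n) (Fin n) ℝ}
    (hQ0 : ∀ i j, 0 ≤ Q i j) (hQ1 : ∀ i, ∑ j, Q i j = 1)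
    {β : ℝ} (hβ0 : 0 ≤ β) (hβ1 : β < 1)
    {x y : Fin n → ℝ} {d : ℝ} (hxy : (1 - β • Q) *ᵥ x = y) (hy : ∀ i, y i ≤ d) :
    ∀ i, x i ≤ d / (1 - β) := by
  have hβ' : (0:ℝ) < 1 - β := by linarith
  have hconst : (1 - β • Q) *ᵥ (fun _ => d / (1 - β)) = fun _ => d := by
    rw [Matrix.sub_mulVec, Matrix.one_mulVec, Matrix.smul_mulVec]
    funext i
    simp only [Pi.sub_apply, Pi.smul_apply, smul_eq_mul, mulVec_apply']
    rw [← Finset.sum_mul, hQ1 i, one_mul]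
    field_simp
  have h := nonneg_of_mulVec hQ0 hQ1 hβ0 hβ1
    (x := (fun _ => d / (1 - β)) - x) (y := (fun _ => d) - y)
    (by rw [Matrix.mulVec_sub, hconst, hxy]) (fun i => by
      simp only [Pi.sub_apply]
      linarith [hy i])
  intro i
  have := h i
  simp only [Pi.sub_apply] at this
  linarith

lemma sum_mulVec' (T : ℕ) (M : ℕ → Matrix (Fin n) (Fin n) ℝ) (v : Fin n → ℝ) :
    (∑ t ∈ Finset.range T, M t) *ᵥ v = ∑ t ∈ Finset.range T, (M t) *ᵥ v := by
  funext i
  have hentry : ∀ j, (∑ t ∈ Finset.range T, M t) i j = ∑ t ∈ Finset.range T, M t i j := by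
    intro j
    exact Matrix.sum_apply i j _ _
  calc ((∑ t ∈ Finset.range T, M t) *ᵥ v) i
      = ∑ j, (∑ t ∈ Finset.range T, M t) i j * v j := rfl
    _ = ∑ j, ∑ t ∈ Finset.range T, M t i j * v j := by
        apply Finset.sum_congr rfl
        intro j _
        rw [hentry j, Finset.sum_mul]
    _ = ∑ t ∈ Finset.range T, ∑ j, M t i j * v j := Finset.sum_comm
    _ = (∑ t ∈ Finset.range T, (M t) *ᵥ v) i := by
        simp [Finset.sum_apply, mulVec_apply']

lemma row_sqrt_le {p v : Fin n → ℝ} (hp : ∀ j, 0 ≤ p j) (hp1 : ∑ j, p j = 1)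
    (hv : ∀ j, 0 ≤ v j) :
    ∑ j, p j * Real.sqrt (v j) ≤ Real.sqrt (∑ j, p j * v j) := by
  have h0 : 0 ≤ ∑ j, p j * Real.sqrt (v j) :=
    Finset.sum_nonneg fun j _ => mul_nonneg (hp j) (Real.sqrt_nonneg _)
  have h1 : 0 ≤ ∑ j, p j * v j := Finset.sum_nonneg fun j _ => mul_nonneg (hp j) (hv j)
  rw [Real.le_sqrt h0 h1]
  calc (∑ j, p j * Real.sqrt (v j)) ^ 2
      = (∑ j, Real.sqrt (p j) * (Real.sqrt (p j) * Real.sqrt (v j))) ^ 2 := by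
        congr 1
        apply Finset.sum_congr rfl
        intro j _
        rw [← mul_assoc, Real.mul_self_sqrt (hp j)]
    _ ≤ (∑ j, Real.sqrt (p j) ^ 2) * ∑ j, (Real.sqrt (p j) * Real.sqrt (v j)) ^ 2 :=
        Finset.sum_mul_sq_le_sq_mul_sq _ _ _
    _ = (∑ j, p j) * ∑ j, p j * v j := by
        congr 1
        · apply Finset.sum_congr rfl
          intro j _
          exact Real.sq_sqrt (hp j)
        · apply Finset.sum_congr rfl
          intro j _
          rw [mul_pow, Real.sq_sqrt (hp j), Real.sq_sqrt (hv j)]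
    _ = ∑ j, p j * v j := by rw [hp1, one_mul]

end Aux

set_option maxHeartbeats 1000000 in
/-- `‖(I − γP)⁻¹ √(Var_P(V))‖_∞ ≤ (4/(γ√(1−γ))) ‖V‖_∞` for `V = (I − γP)⁻¹ r`, `r ≥ 0`. -/
theorem stmt9 (n : ℕ) (P : Matrix (Fin n) (Fin n) ℝ)
    (hP0 : ∀ i j, 0 ≤ P i j) (hP1 : ∀ i, ∑ j, P i j = 1)
    (γ : ℝ) (hγ0 : 0 < γ) (hγ1 : γ < 1)
    (r : Fin n → ℝ) (hr : ∀ i, 0 ≤ r i)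
    (V : Fin n → ℝ) (hV : V = (1 - γ • P)⁻¹.mulVec r)
    (VarP : Fin n → ℝ)
    (hVar : ∀ i, VarP i = P.mulVec (fun j => V j * V j) i - (P.mulVec V i) * (P.mulVec V i)) :
    ‖(1 - γ • P)⁻¹.mulVec (fun i => Real.sqrt (VarP i))‖
      ≤ 4 / (γ * Real.sqrt (1 - γ)) * ‖V‖ := by
  have hγ0' : (0:ℝ) ≤ γ := hγ0.le
  have h1γ : (0:ℝ) < 1 - γ := by linarith
  have hdet : IsUnit (1 - γ • P).det := isUnit_det_aux hP0 hP1 hγ0' hγ1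
  have hAV : (1 - γ • P) *ᵥ V = r := by
    rw [hV, Matrix.mulVec_mulVec, Matrix.mul_nonsing_inv _ hdet, Matrix.one_mulVec]
  have hBell : ∀ i, V i - γ * (P *ᵥ V) i = r i := by
    intro i
    have h := congrFun hAV i
    simpa [Matrix.sub_mulVec, Matrix.one_mulVec, Matrix.smul_mulVec] using h
  set B : ℝ := ‖V‖ with hB
  have hB0 : 0 ≤ B := norm_nonneg _
  have hVB : ∀ i, V i ≤ B := fun i =>
    le_trans (le_abs_self _) (by simpa [Real.norm_eq_abs] using norm_le_pi_norm V i)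
  have hV0 : ∀ i, 0 ≤ V i := nonneg_of_mulVec hP0 hP1 hγ0' hγ1 hAV hr
  have hPnn : ∀ (s : ℕ) (u : Fin n → ℝ), (∀ j, 0 ≤ u j) → ∀ i, 0 ≤ ((P ^ s) *ᵥ u) i := by
    intro s u hu i
    rw [mulVec_apply']
    exact Finset.sum_nonneg fun j _ => mul_nonneg (pow_entry_nonneg hP0 s i j) (hu j)
  have hVar0 : ∀ i, 0 ≤ VarP i := by
    intro i
    rw [hVar i]
    have h := Finset.sum_mul_sq_le_sq_mul_sq Finset.univ
      (fun j => Real.sqrt (P i j)) (fun j => Real.sqrt (P i j) * V j)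
    have e1 : ∑ j, Real.sqrt (P i j) * (Real.sqrt (P i j) * V j) = (P *ᵥ V) i := by
      rw [mulVec_apply']
      apply Finset.sum_congr rfl
      intro j _
      rw [← mul_assoc, Real.mul_self_sqrt (hP0 i j)]
    have e2 : ∑ j, Real.sqrt (P i j) ^ 2 = 1 := by
      rw [← hP1 i]
      apply Finset.sum_congr rfl
      intro j _
      exact Real.sq_sqrt (hP0 i j)
    have e3 : ∑ j, (Real.sqrt (P i j) * V j) ^ 2 = (P *ᵥ (fun j => V j * V j)) i := by
      rw [mulVec_apply']
      apply Finset.sum_congr rfl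
      intro j _
      rw [mul_pow, Real.sq_sqrt (hP0 i j)]
      ring
    rw [e1, e2, e3, one_mul] at h
    nlinarith [h]
  -- choice of the block length T
  set T : ℕ := ⌈(1 - γ)⁻¹⌉₊ with hTdef
  have hTge : (1 - γ)⁻¹ ≤ (T:ℝ) := Nat.le_ceil _
  have hinv1 : (1:ℝ) ≤ (1 - γ)⁻¹ := by
    nlinarith [mul_inv_cancel₀ h1γ.ne', inv_pos.mpr h1γ]
  have hTpos : 0 < T := Nat.ceil_pos.mpr (inv_pos.mpr h1γ)
  have hTle : (T:ℝ) ≤ 2 / (1 - γ) := by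
    have h1 := Nat.ceil_lt_add_one (le_of_lt (inv_pos.mpr h1γ))
    have h2 : (1 - γ)⁻¹ + 1 ≤ 2 / (1 - γ) := by
      rw [div_eq_mul_inv]
      nlinarith [mul_inv_cancel₀ h1γ.ne', hinv1]
    calc (T:ℝ) ≤ (1 - γ)⁻¹ + 1 := le_of_lt h1
      _ ≤ 2 / (1 - γ) := h2
  have hγT : γ ^ T ≤ 1/2 := by
    have hx0 : (0:ℝ) ≤ (1 - γ)/γ := div_nonneg h1γ.le hγ0'
    have hb : (1:ℝ) + (T:ℝ) * ((1 - γ)/γ) ≤ ((1:ℝ) + (1 - γ)/γ) ^ T :=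
      one_add_mul_le_pow (by linarith) T
    have he : (1:ℝ) + (1 - γ)/γ = 1/γ := by field_simp; ring
    have h3 : (1:ℝ) ≤ (T:ℝ) * (1 - γ) := by
      nlinarith [mul_le_mul_of_nonneg_right hTge h1γ.le, inv_mul_cancel₀ h1γ.ne']
    have h4 : (2:ℝ) ≤ 1 + (T:ℝ) * ((1 - γ)/γ) := by
      have h5 : (1:ℝ) ≤ (T:ℝ) * ((1 - γ)/γ) := by
        rw [← mul_div_assoc, le_div_iff₀ hγ0]
        nlinarith [h3]
      linarith
    have h6 : (2:ℝ) ≤ (1/γ)^T := by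
      rw [← he]
      exact le_trans h4 hb
    have h7 : (1/γ)^T = 1/γ^T := by rw [div_pow, one_pow]
    rw [h7] at h6
    have hγTpos : 0 < γ ^ T := pow_pos hγ0 T
    rw [le_div_iff₀ hγTpos] at h6
    linarith
  -- geometric sums
  set G1 : Matrix (Fin n) (Fin n) ℝ := ∑ s ∈ Finset.range T, (γ • P) ^ s with hG1def
  set G2 : Matrix (Fin n) (Fin n) ℝ := ∑ s ∈ Finset.range T, (γ^2 • P) ^ s with hG2def
  have hG1v : ∀ u : Fin n → ℝ, G1 *ᵥ u = ∑ s ∈ Finset.range T, γ^s • ((P^s) *ᵥ u) := by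
    intro u
    rw [hG1def, sum_mulVec']
    apply Finset.sum_congr rfl
    intro s _
    rw [smul_pow, Matrix.smul_mulVec]
  have hG2v : ∀ u : Fin n → ℝ, G2 *ᵥ u = ∑ s ∈ Finset.range T, (γ^2)^s • ((P^s) *ᵥ u) := by
    intro u
    rw [hG2def, sum_mulVec']
    apply Finset.sum_congr rfl
    intro s _
    rw [smul_pow, Matrix.smul_mulVec]
  have hG1vi : ∀ (u : Fin n → ℝ) i, (G1 *ᵥ u) i = ∑ s ∈ Finset.range T, γ^s * ((P^s) *ᵥ u) i := by
    intro u i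
    rw [hG1v]
    simp [Finset.sum_apply]
  have hG2vi : ∀ (u : Fin n → ℝ) i, (G2 *ᵥ u) i = ∑ s ∈ Finset.range T, (γ^2)^s * ((P^s) *ᵥ u) i := by
    intro u i
    rw [hG2v]
    simp [Finset.sum_apply]
  have hG2e : ∀ i j, 0 ≤ G2 i j := by
    intro i j
    rw [hG2def, Matrix.sum_apply]
    apply Finset.sum_nonneg
    intro s _
    rw [smul_pow, Matrix.smul_apply, smul_eq_mul]
    exact mul_nonneg (pow_nonneg (sq_nonneg γ) s) (pow_entry_nonneg hP0 s i j)
  have hG1A : G1 * (1 - γ • P) = 1 - (γ • P) ^ T := by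
    rw [← neg_sub (γ • P) 1, mul_neg, geom_sum_mul, neg_sub]
  have hG2A : G2 * (1 - γ^2 • P) = 1 - (γ^2 • P) ^ T := by
    rw [← neg_sub (γ^2 • P) 1, mul_neg, geom_sum_mul, neg_sub]
  -- the key Bellman identity for the variance
  have hId : ∀ i, γ^2 * VarP i
      = r i * (2 * V i - r i) - ((1 - γ^2 • P) *ᵥ (fun j => V j * V j)) i := by
    intro i
    have hb : γ * (P *ᵥ V) i = V i - r i := by
      have := hBell i
      linarith
    have hexp : ((1 - γ^2 • P) *ᵥ (fun j => V j * V j)) i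
        = V i * V i - γ^2 * (P *ᵥ (fun j => V j * V j)) i := by
      rw [Matrix.sub_mulVec, Matrix.one_mulVec, Matrix.smul_mulVec]
      rfl
    rw [hVar i, hexp]
    have hb2 : (γ * (P *ᵥ V) i) * (γ * (P *ᵥ V) i) = (V i - r i) * (V i - r i) := by
      rw [hb]
    nlinarith [hb2]
  have e0 : γ^2 • VarP
      = (fun i => r i * (2 * V i - r i)) - (1 - γ^2 • P) *ᵥ (fun j => V j * V j) := by
    funext i
    simp only [Pi.smul_apply, smul_eq_mul, Pi.sub_apply]
    exact hId i
  have e1 : γ^2 • (G2 *ᵥ VarP)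
      = G2 *ᵥ (fun i => r i * (2 * V i - r i)) - (fun j => V j * V j)
        + (γ^2 • P) ^ T *ᵥ (fun j => V j * V j) := by
    rw [← Matrix.mulVec_smul, e0, Matrix.mulVec_sub, Matrix.mulVec_mulVec, hG2A,
      Matrix.sub_mulVec, Matrix.one_mulVec]
    abel
  -- entrywise bounds leading to the total-variance bound
  have hb1 : ∀ i, (G2 *ᵥ (fun i => r i * (2 * V i - r i))) i ≤ 2*B * (G2 *ᵥ r) i := by
    intro i
    rw [mulVec_apply', mulVec_apply', Finset.mul_sum]
    apply Finset.sum_le_sum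
    intro j _
    have hyj : r j * (2 * V j - r j) ≤ 2*B*(r j) := by
      nlinarith [hr j, hVB j, sq_nonneg (r j)]
    calc G2 i j * (r j * (2 * V j - r j)) ≤ G2 i j * (2*B*(r j)) :=
          mul_le_mul_of_nonneg_left hyj (hG2e i j)
      _ = 2*B*(G2 i j * r j) := by ring
  have hb2 : ∀ i, (G2 *ᵥ r) i ≤ (G1 *ᵥ r) i := by
    intro i
    rw [hG1vi, hG2vi]
    apply Finset.sum_le_sum
    intro s _
    have hpow : (γ^2)^s ≤ γ^s := by
      rw [← pow_mul]
      exact pow_le_pow_of_le_one hγ0' hγ1.le (by omega)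
    exact mul_le_mul_of_nonneg_right hpow (hPnn s r hr i)
  have hb3 : ∀ i, (G1 *ᵥ r) i ≤ V i := by
    have hG1r : G1 *ᵥ r = V - γ^T • ((P^T) *ᵥ V) := by
      rw [← hAV, Matrix.mulVec_mulVec, hG1A, Matrix.sub_mulVec, Matrix.one_mulVec,
        smul_pow, Matrix.smul_mulVec]
    intro i
    rw [hG1r]
    have := hPnn T V hV0 i
    have h2 : 0 ≤ γ^T := pow_nonneg hγ0' T
    simp only [Pi.sub_apply, Pi.smul_apply, smul_eq_mul]
    nlinarith
  have hb4 : ∀ i, ((γ^2 • P) ^ T *ᵥ (fun j => V j * V j)) i ≤ B^2 := by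
    intro i
    rw [smul_pow, Matrix.smul_mulVec]
    simp only [Pi.smul_apply, smul_eq_mul]
    have hP2 : ((P^T) *ᵥ (fun j => V j * V j)) i ≤ B^2 := by
      rw [mulVec_apply']
      calc ∑ j, (P^T) i j * (V j * V j) ≤ ∑ j, (P^T) i j * B^2 := by
            apply Finset.sum_le_sum
            intro j _
            apply mul_le_mul_of_nonneg_left _ (pow_entry_nonneg hP0 T i j)
            nlinarith [hVB j, hV0 j, hB0]
        _ = B^2 := by rw [← Finset.sum_mul, pow_row_sum hP1 T i, one_mul]
    have hpos : 0 ≤ ((P^T) *ᵥ (fun j => V j * V j)) i :=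
      hPnn T _ (fun j => mul_nonneg (hV0 j) (hV0 j)) i
    have hle1 : (γ^2)^T ≤ 1 := pow_le_one₀ (sq_nonneg γ) (by nlinarith)
    calc (γ^2)^T * ((P^T) *ᵥ (fun j => V j * V j)) i
        ≤ 1 * B^2 := mul_le_mul hle1 hP2 hpos (by norm_num)
      _ = B^2 := by ring
  have hKey : ∀ i, (G2 *ᵥ VarP) i ≤ 2*B^2/γ^2 := by
    intro i
    have he := congrFun e1 i
    simp only [Pi.add_apply, Pi.sub_apply, Pi.smul_apply, smul_eq_mul] at he
    have hc1 : (G2 *ᵥ (fun i => r i * (2 * V i - r i))) i ≤ 2*B*(V i) := by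
      calc (G2 *ᵥ (fun i => r i * (2 * V i - r i))) i ≤ 2*B * (G2 *ᵥ r) i := hb1 i
        _ ≤ 2*B*(V i) := by
            have := (hb2 i).trans (hb3 i)
            nlinarith [hB0]
    have hgoal : γ^2 * (G2 *ᵥ VarP) i ≤ 2*B^2 := by
      nlinarith [hc1, hb4 i, sq_nonneg (B - V i), hVB i, hV0 i]
    rw [le_div_iff₀ (pow_pos hγ0 2)]
    nlinarith [hgoal]
  -- Cauchy–Schwarz chain for the square-root vector
  set sq : Fin n → ℝ := fun i => Real.sqrt (VarP i) with hsqdef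
  set c : ℝ := Real.sqrt (2*T) * B / γ with hcdef
  have hc0 : 0 ≤ c := by
    apply div_nonneg _ hγ0'
    exact mul_nonneg (Real.sqrt_nonneg _) hB0
  have hw0 : ∀ i, 0 ≤ (G1 *ᵥ sq) i := by
    intro i
    rw [hG1vi]
    apply Finset.sum_nonneg
    intro s _
    exact mul_nonneg (pow_nonneg hγ0' s) (hPnn s sq (fun j => Real.sqrt_nonneg _) i)
  have hw : ∀ i, (G1 *ᵥ sq) i ≤ c := by
    intro i
    have hstep1 : ∀ s, ((P^s) *ᵥ sq) i ≤ Real.sqrt (((P^s) *ᵥ VarP) i) := by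
      intro s
      have := row_sqrt_le (p := fun j => (P^s) i j) (v := VarP)
        (fun j => pow_entry_nonneg hP0 s i j) (pow_row_sum hP1 s i) hVar0
      simpa [mulVec_apply'] using this
    set S : ℝ := ∑ s ∈ Finset.range T, γ^s * Real.sqrt (((P^s) *ᵥ VarP) i) with hSdef
    have hS0 : 0 ≤ S :=
      Finset.sum_nonneg fun s _ => mul_nonneg (pow_nonneg hγ0' s) (Real.sqrt_nonneg _)
    have hSle : (G1 *ᵥ sq) i ≤ S := by
      rw [hG1vi]
      apply Finset.sum_le_sum
      intro s _
      exact mul_le_mul_of_nonneg_left (hstep1 s) (pow_nonneg hγ0' s)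
    have hS2 : S^2 ≤ (T:ℝ) * ((G2 *ᵥ VarP) i) := by
      have h := Finset.sum_mul_sq_le_sq_mul_sq (Finset.range T)
        (fun _ => (1:ℝ)) (fun s => γ^s * Real.sqrt (((P^s) *ᵥ VarP) i))
      have e2 : ∑ s ∈ Finset.range T, ((1:ℝ))^2 = (T:ℝ) := by simp
      have e3 : ∑ s ∈ Finset.range T, (γ^s * Real.sqrt (((P^s) *ᵥ VarP) i))^2
          = (G2 *ᵥ VarP) i := by
        rw [hG2vi]
        apply Finset.sum_congr rfl
        intro s _
        rw [mul_pow, Real.sq_sqrt (hPnn s VarP hVar0 i), ← pow_mul, mul_comm s 2, pow_mul]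
      have e4 : ∑ s ∈ Finset.range T, (1:ℝ) * (γ^s * Real.sqrt (((P^s) *ᵥ VarP) i)) = S := by
        rw [hSdef]
        apply Finset.sum_congr rfl
        intro s _
        ring
      rw [e2, e3, e4] at h
      exact h
    have hS2' : S^2 ≤ c^2 := by
      have hc2 : c^2 = 2*(T:ℝ)*B^2/γ^2 := by
        rw [hcdef]
        rw [div_pow, mul_pow, Real.sq_sqrt (by positivity)]
      have h5 : (T:ℝ) * ((G2 *ᵥ VarP) i) ≤ (T:ℝ) * (2*B^2/γ^2) := by
        apply mul_le_mul_of_nonneg_left (hKey i) (Nat.cast_nonneg T)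
      rw [hc2]
      calc S^2 ≤ (T:ℝ) * ((G2 *ᵥ VarP) i) := hS2
        _ ≤ (T:ℝ) * (2*B^2/γ^2) := h5
        _ = 2*(T:ℝ)*B^2/γ^2 := by ring
    have hSc : S ≤ c := by
      nlinarith [hS2', hS0, hc0]
    exact hSle.trans hSc
  -- transfer through the inverse of `1 - γ^T • P^T`
  set x : Fin n → ℝ := (1 - γ • P)⁻¹ *ᵥ sq with hxdef
  have hAx : (1 - γ • P) *ᵥ x = sq := by
    rw [hxdef, Matrix.mulVec_mulVec, Matrix.mul_nonsing_inv _ hdet, Matrix.one_mulVec]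
  have hDx : (1 - γ^T • P^T) *ᵥ x = G1 *ᵥ sq := by
    have hD : (1 - γ^T • P^T : Matrix (Fin n) (Fin n) ℝ) = G1 * (1 - γ • P) := by
      rw [hG1A, smul_pow]
    rw [hD, ← Matrix.mulVec_mulVec, hAx]
  have hPT0 : ∀ i j, 0 ≤ (P^T) i j := pow_entry_nonneg hP0 T
  have hPT1 : ∀ i, ∑ j, (P^T) i j = 1 := pow_row_sum hP1 T
  have hβ0 : (0:ℝ) ≤ γ^T := pow_nonneg hγ0' T
  have hβ1 : γ^T < 1 := by
    calc γ^T ≤ 1/2 := hγT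
      _ < 1 := by norm_num
  have hx0 : ∀ i, 0 ≤ x i := nonneg_of_mulVec hPT0 hPT1 hβ0 hβ1 hDx hw0
  have hxc : ∀ i, x i ≤ c / (1 - γ^T) := le_const_of_mulVec hPT0 hPT1 hβ0 hβ1 hDx hw
  have hx2c : ∀ i, x i ≤ 2 * c := by
    intro i
    refine (hxc i).trans ?_
    rw [div_le_iff₀ (by linarith : (0:ℝ) < 1 - γ^T)]
    nlinarith [hγT, hc0, hβ0]
  -- numeric wrap-up
  have hsγ : 0 < Real.sqrt (1 - γ) := Real.sqrt_pos.mpr h1γ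
  have hsqT : Real.sqrt (2*(T:ℝ)) ≤ 2 / Real.sqrt (1 - γ) := by
    have h2T : (2*(T:ℝ)) ≤ 4/(1-γ) := by
      have h := hTle
      rw [le_div_iff₀ h1γ] at h ⊢
      nlinarith
    calc Real.sqrt (2*(T:ℝ)) ≤ Real.sqrt (4/(1-γ)) := Real.sqrt_le_sqrt h2T
      _ = 2 / Real.sqrt (1-γ) := by
          rw [Real.sqrt_div (by norm_num) (1-γ), show (4:ℝ) = 2^2 by norm_num,
            Real.sqrt_sq (by norm_num)]
  have hfinal : 2*c ≤ 4 / (γ * Real.sqrt (1-γ)) * B := by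
    rw [hcdef]
    rw [div_mul_eq_mul_div, le_div_iff₀ (by positivity : (0:ℝ) < γ * Real.sqrt (1-γ))]
    have h6 : Real.sqrt (2*(T:ℝ)) * Real.sqrt (1-γ) ≤ 2 := by
      have := mul_le_mul_of_nonneg_right hsqT hsγ.le
      rwa [div_mul_cancel₀ _ hsγ.ne'] at this
    calc 2 * (Real.sqrt (2*(T:ℝ)) * B / γ) * (γ * Real.sqrt (1-γ))
        = 2 * (Real.sqrt (2*(T:ℝ)) * Real.sqrt (1-γ)) * B := by
          field_simp
      _ ≤ 2 * 2 * B := by nlinarith [hB0, h6, Real.sqrt_nonneg (2*(T:ℝ)), hsγ.le]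
      _ = 4 * B := by ring
  rw [pi_norm_le_iff_of_nonneg (by positivity)]
  intro i
  rw [Real.norm_eq_abs, abs_of_nonneg (hx0 i)]
  exact le_trans (hx2c i) hfinal
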